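/- Let G = (V, E) be an Eulerian simple graph with two vertices u and v such that the degree of v in G is strictly larger than the degree of u in G. Then there exist two distinct vertices a and b, both adjacent to v, neither adjacent to u, and both different from u, such that the graph G' obtained from G by removing the edges av and bv and adding the edges au and bu is Eulerian; in particular, G' is connected, the degree of u increases by 2, the degree of v decreases by 2, and all other degrees are unchanged. -/

import Mathlib

open SimpleGraph Finset
open scoped Classical

/-- A simple graph is Eulerian if it is connected and every vertex has even degree. -/
def IsEulerianGraph {V : Type*} [Fintype V] (G : SimpleGraph V) : Prop :=
  G.Connected ∧ ∀ v : V, Even (G.degree v)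

lemma sym2_ne_of {α : Type*} {x y z w : α} (h1 : x = z → y = w → False)
    (h2 : x = w → y = z → False) : s(x, y) ≠ s(z, w) := by
  intro h
  rw [Sym2.eq_iff] at h
  rcases h with ⟨ha, hb⟩ | ⟨ha, hb⟩
  · exact h1 ha hb
  · exact h2 ha hb

/-- Reachability induction: a predicate closed under adjacency propagates along reachability. -/
lemma reach_ind {V : Type*} (K : SimpleGraph V) (P : V → Prop)
    (step : ∀ x y, P x → K.Adj x y → P y) :
    ∀ {x y : V}, P x → K.Reachable x y → P y := by
  intro x y hx hr
  obtain ⟨w⟩ := hr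
  induction w with
  | nil => exact hx
  | cons h p ih => exact ih (step _ _ hx h)

/-- Handshake for an adjacency-closed set of vertices. -/
lemma even_sum_degree_closed {V : Type*} [Fintype V] (K : SimpleGraph V) (S : Finset V)
    (closed : ∀ x ∈ S, ∀ y, K.Adj x y → y ∈ S) :
    Even (∑ w ∈ S, K.degree w) := by
  classical
  let K' : SimpleGraph V :=
    { Adj := fun x y => K.Adj x y ∧ x ∈ S ∧ y ∈ S
      symm := ⟨fun x y h => ⟨h.1.symm, h.2.2, h.2.1⟩⟩
      loopless := ⟨fun x h => K.loopless.irrefl x h.1⟩ }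
  have hdeg : ∀ w ∈ S, K'.degree w = K.degree w := by
    intro w hw
    unfold SimpleGraph.degree
    congr 1
    ext x
    simp only [mem_neighborFinset]
    constructor
    · exact fun h => h.1
    · exact fun h => ⟨h, hw, closed w hw x h⟩
  have hdeg0 : ∀ w ∉ S, K'.degree w = 0 := by
    intro w hw
    rw [SimpleGraph.degree, Finset.card_eq_zero]
    ext x
    simp only [mem_neighborFinset, Finset.notMem_empty, iff_false]
    exact fun h => hw h.2.1
  have h1 : ∑ w : V, K'.degree w = 2 * K'.edgeFinset.card :=
    K'.sum_degrees_eq_twice_card_edges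
  have h2 : ∑ w ∈ S, K.degree w = ∑ w : V, K'.degree w := by
    rw [← Finset.sum_subset (Finset.subset_univ S) (fun x _ hx => hdeg0 x hx)]
    exact Finset.sum_congr rfl (fun x hx => (hdeg x hx).symm)
  rw [h2, h1]
  exact even_two_mul _

set_option maxHeartbeats 1000000 in
lemma exists_good_pair {V : Type*} [Fintype V] (G : SimpleGraph V)
    (hconn : G.Connected) (heven : ∀ w, Even (G.degree w)) (u v : V)
    (hdeg : G.degree u < G.degree v) :
    ∃ a b : V, a ≠ b ∧ G.Adj v a ∧ G.Adj v b ∧ ¬ G.Adj u a ∧ ¬ G.Adj u b ∧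
      a ≠ u ∧ b ≠ u ∧
      (G.deleteEdges {s(a, v), s(b, v)}).Reachable u v := by
  have huv : u ≠ v := fun h => by rw [h] at hdeg; exact lt_irrefl _ hdeg
  have hdu : 0 < G.degree u := by
    rw [G.degree_pos_iff_exists_adj]
    obtain ⟨w⟩ := hconn.preconnected u v
    cases w with
    | nil => exact absurd rfl huv
    | cons h p => exact ⟨_, h⟩
  have hdu2 : 2 ≤ G.degree u := by
    obtain ⟨m, hm⟩ := heven u; omega
  have hdv : G.degree u + 2 ≤ G.degree v := by
    obtain ⟨m, hm⟩ := heven u; obtain ⟨n, hn⟩ := heven v; omega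
  set A : Finset V := G.neighborFinset v \ insert u (G.neighborFinset u) with hA
  have memA : ∀ x ∈ A, G.Adj v x ∧ ¬ G.Adj u x ∧ x ≠ u := by
    intro x hx
    rw [hA, Finset.mem_sdiff, Finset.mem_insert, mem_neighborFinset, mem_neighborFinset] at hx
    tauto
  have hcardA : 2 ≤ A.card := by
    have hint : (G.neighborFinset v ∩ insert u (G.neighborFinset u)).card ≤ G.degree u := by
      by_cases hadj : G.Adj u v
      · have hsub : G.neighborFinset v ∩ insert u (G.neighborFinset u) ⊆
            (insert u (G.neighborFinset u)).erase v := by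
          intro x hx
          rw [Finset.mem_inter, mem_neighborFinset] at hx
          exact Finset.mem_erase.mpr ⟨hx.1.ne', hx.2⟩
        have h1 := Finset.card_le_card hsub
        have h2 : ((insert u (G.neighborFinset u)).erase v).card =
            (insert u (G.neighborFinset u)).card - 1 :=
          Finset.card_erase_of_mem
            (Finset.mem_insert_of_mem ((mem_neighborFinset _ _ _).mpr hadj))
        have h3 := Finset.card_insert_le u (G.neighborFinset u)
        have h4 : (G.neighborFinset u).card = G.degree u := rfl
        omega
      · have hsub : G.neighborFinset v ∩ insert u (G.neighborFinset u) ⊆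
            G.neighborFinset u := by
          intro x hx
          rw [Finset.mem_inter, Finset.mem_insert, mem_neighborFinset] at hx
          rcases hx.2 with h | h
          · exact absurd (h ▸ hx.1).symm hadj
          · exact h
        exact Finset.card_le_card hsub
    have h5 : (G.neighborFinset v ∩ insert u (G.neighborFinset u)).card + A.card
        = G.degree v := by
      rw [hA]
      exact Finset.card_inter_add_card_sdiff _ _
    omega
  obtain ⟨a, haA, b, hbA, hab⟩ := Finset.one_lt_card.mp (by omega : 1 < A.card)
  obtain ⟨hva, hua, hau⟩ := memA a haA
  obtain ⟨hvb, hub, hbu⟩ := memA b hbA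
  have hav : a ≠ v := hva.ne'
  have hbv : b ≠ v := hvb.ne'
  by_cases hr : (G.deleteEdges {s(a, v), s(b, v)}).Reachable u v
  · exact ⟨a, b, hab, hva, hvb, hua, hub, hau, hbu, hr⟩
  set H := G.deleteEdges {s(a, v), s(b, v)} with hH
  have hHadj : ∀ x y : V, H.Adj x y ↔ G.Adj x y ∧ s(x, y) ≠ s(a, v) ∧ s(x, y) ≠ s(b, v) := by
    intro x y
    rw [hH, SimpleGraph.deleteEdges_adj]
    simp only [Set.mem_insert_iff, Set.mem_singleton_iff]
    tauto
  set S : Finset V := Finset.univ.filter (fun w => H.Reachable u w) with hS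
  have memS : ∀ w : V, w ∈ S ↔ H.Reachable u w := by
    intro w; rw [hS, Finset.mem_filter]; simp
  have uS : u ∈ S := (memS u).mpr (SimpleGraph.Reachable.refl u)
  have vS : v ∉ S := fun h => hr ((memS v).mp h)
  have closedH : ∀ x ∈ S, ∀ y, H.Adj x y → y ∈ S := by
    intro x hx y hxy
    exact (memS y).mpr (((memS x).mp hx).trans hxy.reachable)
  have NuS : ∀ w, G.Adj u w → w ∈ S := by
    intro w hw
    apply closedH u uS
    rw [hHadj]
    exact ⟨hw, sym2_ne_of (fun h _ => hau h.symm) (fun h _ => huv h),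
      sym2_ne_of (fun h _ => hbu h.symm) (fun h _ => huv h)⟩
  by_cases hc : ∃ c ∈ A, c ≠ a ∧ c ≠ b
  · obtain ⟨c, hcA, hca, hcb⟩ := hc
    obtain ⟨hvc, huc, hcu⟩ := memA c hcA
    have hcv : c ≠ v := hvc.ne'
    have hHdeg : ∀ w : V, w ≠ a → w ≠ b → w ≠ v → H.degree w = G.degree w := by
      intro w hwa hwb hwv
      unfold SimpleGraph.degree
      congr 1
      ext x
      rw [mem_neighborFinset, mem_neighborFinset, hHadj]
      constructor
      · exact fun h => h.1
      · intro h
        exact ⟨h, sym2_ne_of (fun h1 _ => hwa h1) (fun h1 _ => hwv h1),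
          sym2_ne_of (fun h1 _ => hwb h1) (fun h1 _ => hwv h1)⟩
    have hHa : Odd (H.degree a) := by
      have hNa : H.neighborFinset a = (G.neighborFinset a).erase v := by
        ext x
        rw [Finset.mem_erase, mem_neighborFinset, mem_neighborFinset, hHadj]
        constructor
        · rintro ⟨h, h1, _⟩
          exact ⟨fun hx => h1 (by rw [hx]), h⟩
        · rintro ⟨hxv, h⟩
          exact ⟨h, sym2_ne_of (fun _ h2 => hxv h2) (fun h1 _ => hav h1),
            sym2_ne_of (fun h1 _ => hab h1) (fun h1 _ => hav h1)⟩
      have hva' : v ∈ G.neighborFinset a := (mem_neighborFinset _ _ _).mpr hva.symm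
      have h4 : H.degree a = G.degree a - 1 := by
        unfold SimpleGraph.degree
        rw [hNa, Finset.card_erase_of_mem hva']
      have h5 : 0 < G.degree a := Finset.card_pos.mpr ⟨v, hva'⟩
      obtain ⟨m, hm⟩ := heven a
      rw [h4, Nat.odd_iff]
      omega
    by_cases hbS : b ∈ S
    · -- transfer to the pair (a, c)
      set Hc := G.deleteEdges {s(a, v), s(c, v)} with hHc
      have hHcadj : ∀ x y : V, G.Adj x y → s(x, y) ≠ s(a, v) → s(x, y) ≠ s(c, v) →
          Hc.Adj x y := by
        intro x y h h1 h2
        rw [hHc, SimpleGraph.deleteEdges_adj]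
        simp only [Set.mem_insert_iff, Set.mem_singleton_iff]
        tauto
      have key : ∀ x y : V, (Hc.Reachable u x ∧ H.Reachable u x) → H.Adj x y →
          (Hc.Reachable u y ∧ H.Reachable u y) := by
        rintro x y ⟨r2, r1⟩ hxy
        have r1y : H.Reachable u y := r1.trans hxy.reachable
        have hyv : y ≠ v := fun h => hr (h ▸ r1y)
        have hxv : x ≠ v := fun h => hr (h ▸ r1)
        obtain ⟨hg, h1, _⟩ := (hHadj x y).mp hxy
        have h2 : s(x, y) ≠ s(c, v) :=
          sym2_ne_of (fun _ hy => hyv hy) (fun hx _ => hxv hx)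
        exact ⟨r2.trans (hHcadj x y hg h1 h2).reachable, r1y⟩
      have hPb : Hc.Reachable u b ∧ H.Reachable u b :=
        reach_ind H _ key ⟨SimpleGraph.Reachable.refl u, SimpleGraph.Reachable.refl u⟩
          ((memS b).mp hbS)
      have hbvEdge : Hc.Adj b v := by
        refine hHcadj b v hvb.symm ?_ ?_
        · exact sym2_ne_of (fun h1 _ => hab h1.symm) (fun h1 _ => hbv h1)
        · exact sym2_ne_of (fun h1 _ => hcb h1.symm) (fun h1 _ => hbv h1)
      exact ⟨a, c, fun h => hca h.symm, hva, hvc, hua, huc, hau, hcu,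
        hPb.1.trans hbvEdge.reachable⟩
    · by_cases haS : a ∈ S
      · -- parity contradiction
        exfalso
        have hev : Even (∑ w ∈ S, H.degree w) := by convert even_sum_degree_closed H S closedH
        rw [← Finset.sum_erase_add S _ haS] at hev
        have heverase : Even (∑ w ∈ S.erase a, H.degree w) := by
          apply Finset.even_sum
          intro w hw
          rw [hHdeg w (Finset.ne_of_mem_erase hw)
            (fun h => hbS (h ▸ Finset.mem_of_mem_erase hw))
            (fun h => vS (h ▸ Finset.mem_of_mem_erase hw))]
          exact heven w
        obtain ⟨m, hm⟩ := hev
        obtain ⟨n, hn⟩ := heverase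
        obtain ⟨k, hk⟩ := hHa
        omega
      · -- neither a nor b reachable: S is closed under G, contradicting connectivity
        exfalso
        have closedG : ∀ x y : V, x ∈ S → G.Adj x y → y ∈ S := by
          intro x y hx hxy
          apply closedH x hx y
          rw [hHadj]
          exact ⟨hxy, sym2_ne_of (fun h1 _ => haS (h1 ▸ hx)) (fun h1 _ => vS (h1 ▸ hx)),
            sym2_ne_of (fun h1 _ => hbS (h1 ▸ hx)) (fun h1 _ => vS (h1 ▸ hx))⟩
        exact vS (reach_ind G (· ∈ S) (fun x y hx h => closedG x y hx h) uS
          (hconn.preconnected u v))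
  · -- all neighbors of v other than a, b are in the closed set S: contradiction
    exfalso
    push_neg at hc
    have hNv : ∀ w, G.Adj v w → w = a ∨ w = b := by
      intro w hw
      by_cases hwa : w = a
      · exact Or.inl hwa
      by_cases hwb : w = b
      · exact Or.inr hwb
      exfalso
      have hwA : w ∉ A := fun h => hwb (hc w h hwa)
      have hwX : w ∈ insert u (G.neighborFinset u) := by
        rw [hA, Finset.mem_sdiff] at hwA
        push_neg at hwA
        exact hwA ((mem_neighborFinset _ _ _).mpr hw)
      have hwS : w ∈ S := by
        rcases Finset.mem_insert.mp hwX with h | h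
        · exact h ▸ uS
        · exact NuS w ((mem_neighborFinset _ _ _).mp h)
      have hadjwv : H.Adj w v := by
        rw [hHadj]
        exact ⟨hw.symm, sym2_ne_of (fun h1 _ => hwa h1) (fun _ h2 => hav h2.symm),
          sym2_ne_of (fun h1 _ => hwb h1) (fun _ h2 => hbv h2.symm)⟩
      exact vS (closedH w hwS v hadjwv)
    have hsub : G.neighborFinset v ⊆ {a, b} := by
      intro w hw
      rw [mem_neighborFinset] at hw
      rcases hNv w hw with h | h <;> simp [h]
    have h6 : G.degree v ≤ ({a, b} : Finset V).card := Finset.card_le_card hsub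
    have h7 : ({a, b} : Finset V).card ≤ 2 := Finset.card_insert_le _ _ |>.trans (by simp)
    omega

set_option maxHeartbeats 1000000 in
theorem eulerian_increasing_switch {V : Type*} [Fintype V]
    (G : SimpleGraph V) (hG : IsEulerianGraph G) (u v : V)
    (hdeg : G.degree u < G.degree v) :
    ∃ a b : V, a ≠ b ∧
      G.Adj v a ∧ G.Adj v b ∧ ¬ G.Adj u a ∧ ¬ G.Adj u b ∧ a ≠ u ∧ b ≠ u ∧
      (let G' : SimpleGraph V :=
        SimpleGraph.fromEdgeSet
          ((G.edgeSet \ {s(a, v), s(b, v)}) ∪ {s(a, u), s(b, u)});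
       IsEulerianGraph G' ∧ G'.Connected ∧
       G'.degree u = G.degree u + 2 ∧
       G'.degree v + 2 = G.degree v ∧
       ∀ w : V, w ≠ u → w ≠ v → G'.degree w = G.degree w) := by
  obtain ⟨hconn, heven⟩ := hG
  obtain ⟨a, b, hab, hva, hvb, hua, hub, hau, hbu, hreach⟩ :=
    exists_good_pair G hconn heven u v hdeg
  have huv : u ≠ v := fun h => by rw [h] at hdeg; exact lt_irrefl _ hdeg
  have hav : a ≠ v := hva.ne'
  have hbv : b ≠ v := hvb.ne'
  refine ⟨a, b, hab, hva, hvb, hua, hub, hau, hbu, ?_⟩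
  set G' : SimpleGraph V :=
    SimpleGraph.fromEdgeSet
      ((G.edgeSet \ {s(a, v), s(b, v)}) ∪ {s(a, u), s(b, u)}) with hG'
  have hG'adj : ∀ x y : V, G'.Adj x y ↔
      ((G.Adj x y ∧ s(x, y) ≠ s(a, v) ∧ s(x, y) ≠ s(b, v)) ∨
        s(x, y) = s(a, u) ∨ s(x, y) = s(b, u)) := by
    intro x y
    rw [hG', SimpleGraph.fromEdgeSet_adj]
    simp only [Set.mem_union, Set.mem_diff, Set.mem_insert_iff, Set.mem_singleton_iff,
      SimpleGraph.mem_edgeSet, not_or]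
    constructor
    · rintro ⟨⟨h, h1, h2⟩ | h | h, hxy⟩
      · exact Or.inl ⟨h, h1, h2⟩
      · exact Or.inr (Or.inl h)
      · exact Or.inr (Or.inr h)
    · rintro (⟨h, h1, h2⟩ | h | h)
      · exact ⟨Or.inl ⟨h, h1, h2⟩, h.ne⟩
      · refine ⟨Or.inr (Or.inl h), ?_⟩
        rintro rfl
        rcases Sym2.eq_iff.mp h with ⟨h1, h2⟩ | ⟨h1, h2⟩
        · exact hau (h1.symm.trans h2)
        · exact hau (h2.symm.trans h1)
      · refine ⟨Or.inr (Or.inr h), ?_⟩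
        rintro rfl
        rcases Sym2.eq_iff.mp h with ⟨h1, h2⟩ | ⟨h1, h2⟩
        · exact hbu (h1.symm.trans h2)
        · exact hbu (h2.symm.trans h1)
  -- neighborhoods
  have hNu : G'.neighborFinset u = insert a (insert b (G.neighborFinset u)) := by
    ext x
    simp only [mem_neighborFinset, Finset.mem_insert, hG'adj]
    constructor
    · rintro (⟨h, _, _⟩ | h | h)
      · exact Or.inr (Or.inr h)
      · rcases Sym2.eq_iff.mp h with ⟨h1, _⟩ | ⟨_, h2⟩
        · exact absurd h1.symm hau
        · exact Or.inl h2
      · rcases Sym2.eq_iff.mp h with ⟨h1, _⟩ | ⟨_, h2⟩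
        · exact absurd h1.symm hbu
        · exact Or.inr (Or.inl h2)
    · rintro (rfl | rfl | h)
      · exact Or.inr (Or.inl Sym2.eq_swap)
      · exact Or.inr (Or.inr Sym2.eq_swap)
      · exact Or.inl ⟨h, sym2_ne_of (fun h1 _ => hau h1.symm) (fun h1 _ => huv h1),
          sym2_ne_of (fun h1 _ => hbu h1.symm) (fun h1 _ => huv h1)⟩
  have haNu : a ∉ G.neighborFinset u := fun h => hua ((mem_neighborFinset _ _ _).mp h)
  have hbNu : b ∉ G.neighborFinset u := fun h => hub ((mem_neighborFinset _ _ _).mp h)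
  have hdegu : G'.degree u = G.degree u + 2 := by
    unfold SimpleGraph.degree
    rw [hNu, Finset.card_insert_of_notMem (by simp [hab, haNu]),
      Finset.card_insert_of_notMem hbNu]
  have hNv : G'.neighborFinset v = ((G.neighborFinset v).erase a).erase b := by
    ext x
    simp only [Finset.mem_erase, mem_neighborFinset, hG'adj]
    constructor
    · rintro (⟨h, h1, h2⟩ | h | h)
      · exact ⟨fun hx => h2 (by rw [hx]; exact Sym2.eq_swap),
          fun hx => h1 (by rw [hx]; exact Sym2.eq_swap), h⟩
      · rcases Sym2.eq_iff.mp h with ⟨h1, _⟩ | ⟨h1, _⟩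
        · exact absurd h1.symm hav
        · exact absurd h1.symm huv
      · rcases Sym2.eq_iff.mp h with ⟨h1, _⟩ | ⟨h1, _⟩
        · exact absurd h1.symm hbv
        · exact absurd h1.symm huv
    · rintro ⟨hxb, hxa, h⟩
      exact Or.inl ⟨h, sym2_ne_of (fun h1 _ => hav h1.symm) (fun _ h2 => hxa h2),
        sym2_ne_of (fun h1 _ => hbv h1.symm) (fun _ h2 => hxb h2)⟩
  have haNv : a ∈ G.neighborFinset v := (mem_neighborFinset _ _ _).mpr hva
  have hbNv : b ∈ G.neighborFinset v := (mem_neighborFinset _ _ _).mpr hvb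
  have hdegv2 : 1 < (G.neighborFinset v).card :=
    Finset.one_lt_card.mpr ⟨a, haNv, b, hbNv, hab⟩
  have hdegv : G'.degree v + 2 = G.degree v := by
    unfold SimpleGraph.degree
    rw [hNv, Finset.card_erase_of_mem (Finset.mem_erase.mpr ⟨fun h => hab h.symm, hbNv⟩),
      Finset.card_erase_of_mem haNv]
    have : (G.neighborFinset v).card = G.degree v := rfl
    omega
  have hNa : G'.neighborFinset a = insert u ((G.neighborFinset a).erase v) := by
    ext x
    simp only [Finset.mem_insert, Finset.mem_erase, mem_neighborFinset, hG'adj]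
    constructor
    · rintro (⟨h, h1, h2⟩ | h | h)
      · exact Or.inr ⟨fun hx => h1 (by rw [hx]), h⟩
      · rcases Sym2.eq_iff.mp h with ⟨_, h2⟩ | ⟨h1, _⟩
        · exact Or.inl h2
        · exact absurd h1 hau
      · rcases Sym2.eq_iff.mp h with ⟨h1, _⟩ | ⟨h1, _⟩
        · exact absurd h1 hab
        · exact absurd h1 hau
    · rintro (rfl | ⟨hxv, h⟩)
      · exact Or.inr (Or.inl rfl)
      · exact Or.inl ⟨h, sym2_ne_of (fun _ h2 => hxv h2) (fun h1 _ => hav h1),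
          sym2_ne_of (fun h1 _ => hab h1) (fun h1 _ => hav h1)⟩
  have hNb : G'.neighborFinset b = insert u ((G.neighborFinset b).erase v) := by
    ext x
    simp only [Finset.mem_insert, Finset.mem_erase, mem_neighborFinset, hG'adj]
    constructor
    · rintro (⟨h, h1, h2⟩ | h | h)
      · exact Or.inr ⟨fun hx => h2 (by rw [hx]), h⟩
      · rcases Sym2.eq_iff.mp h with ⟨h1, _⟩ | ⟨h1, _⟩
        · exact absurd h1 (fun h => hab h.symm)
        · exact absurd h1 hbu
      · rcases Sym2.eq_iff.mp h with ⟨_, h2⟩ | ⟨h1, _⟩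
        · exact Or.inl h2
        · exact absurd h1 hbu
    · rintro (rfl | ⟨hxv, h⟩)
      · exact Or.inr (Or.inr rfl)
      · exact Or.inl ⟨h, sym2_ne_of (fun h1 _ => hab h1.symm) (fun h1 _ => hbv h1),
          sym2_ne_of (fun _ h2 => hxv h2) (fun h1 _ => hbv h1)⟩
  have hdega : G'.degree a = G.degree a := by
    unfold SimpleGraph.degree
    have hvNa : v ∈ G.neighborFinset a := (mem_neighborFinset _ _ _).mpr hva.symm
    have huNa : u ∉ (G.neighborFinset a).erase v := by
      intro h
      exact hua (((mem_neighborFinset _ _ _).mp (Finset.mem_of_mem_erase h)).symm)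
    rw [hNa, Finset.card_insert_of_notMem huNa, Finset.card_erase_of_mem hvNa]
    have : 0 < (G.neighborFinset a).card := Finset.card_pos.mpr ⟨v, hvNa⟩
    omega
  have hdegb : G'.degree b = G.degree b := by
    unfold SimpleGraph.degree
    have hvNb : v ∈ G.neighborFinset b := (mem_neighborFinset _ _ _).mpr hvb.symm
    have huNb : u ∉ (G.neighborFinset b).erase v := by
      intro h
      exact hub (((mem_neighborFinset _ _ _).mp (Finset.mem_of_mem_erase h)).symm)
    rw [hNb, Finset.card_insert_of_notMem huNb, Finset.card_erase_of_mem hvNb]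
    have : 0 < (G.neighborFinset b).card := Finset.card_pos.mpr ⟨v, hvNb⟩
    omega
  have hdegother : ∀ w : V, w ≠ u → w ≠ v → G'.degree w = G.degree w := by
    intro w hwu hwv
    by_cases hwa : w = a
    · rw [hwa]; exact hdega
    by_cases hwb : w = b
    · rw [hwb]; exact hdegb
    unfold SimpleGraph.degree
    congr 1
    ext x
    simp only [mem_neighborFinset, hG'adj]
    constructor
    · rintro (⟨h, _, _⟩ | h | h)
      · exact h
      · rcases Sym2.eq_iff.mp h with ⟨h1, _⟩ | ⟨h1, _⟩
        · exact absurd h1 hwa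
        · exact absurd h1 hwu
      · rcases Sym2.eq_iff.mp h with ⟨h1, _⟩ | ⟨h1, _⟩
        · exact absurd h1 hwb
        · exact absurd h1 hwu
    · intro h
      exact Or.inl ⟨h, sym2_ne_of (fun h1 _ => hwa h1) (fun h1 _ => hwv h1),
        sym2_ne_of (fun h1 _ => hwb h1) (fun h1 _ => hwv h1)⟩
  -- connectivity
  have hle : G.deleteEdges {s(a, v), s(b, v)} ≤ G' := by
    intro x y h
    rw [SimpleGraph.deleteEdges_adj, Set.mem_insert_iff, Set.mem_singleton_iff, not_or] at h
    exact (hG'adj x y).mpr (Or.inl ⟨h.1, h.2.1, h.2.2⟩)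
  have ruv : G'.Reachable u v := hreach.mono hle
  have hadjua : G'.Adj u a := (hG'adj u a).mpr (Or.inr (Or.inl Sym2.eq_swap))
  have hadjub : G'.Adj u b := (hG'adj u b).mpr (Or.inr (Or.inr Sym2.eq_swap))
  have key : ∀ x y : V, G.Adj x y → G'.Reachable x y := by
    intro x y h
    by_cases h1 : s(x, y) = s(a, v)
    · rcases Sym2.eq_iff.mp h1 with ⟨rfl, rfl⟩ | ⟨rfl, rfl⟩
      · exact (hadjua.symm.reachable).trans ruv
      · exact ruv.symm.trans hadjua.reachable
    by_cases h2 : s(x, y) = s(b, v)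
    · rcases Sym2.eq_iff.mp h2 with ⟨rfl, rfl⟩ | ⟨rfl, rfl⟩
      · exact (hadjub.symm.reachable).trans ruv
      · exact ruv.symm.trans hadjub.reachable
    · exact ((hG'adj x y).mpr (Or.inl ⟨h, h1, h2⟩)).reachable
  have lift : ∀ x y : V, G.Reachable x y → G'.Reachable x y := by
    intro x y h
    exact reach_ind G (fun z => G'.Reachable x z)
      (fun p q hp hadj => hp.trans (key p q hadj)) (SimpleGraph.Reachable.refl x) h
  have hconn' : G'.Connected := by
    rw [SimpleGraph.connected_iff]
    refine ⟨fun x y => ?_, hconn.nonempty⟩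
    exact (lift u x (hconn.preconnected u x)).symm.trans (lift u y (hconn.preconnected u y))
  have heven' : ∀ w : V, Even (G'.degree w) := by
    intro w
    by_cases hwu : w = u
    · subst hwu
      rw [hdegu]
      obtain ⟨m, hm⟩ := heven w
      exact ⟨m + 1, by omega⟩
    by_cases hwv : w = v
    · subst hwv
      obtain ⟨m, hm⟩ := heven w
      refine ⟨m - 1, ?_⟩
      omega
    · rw [hdegother w hwu hwv]; exact heven w
  exact ⟨⟨hconn', by convert heven'⟩, hconn', by convert hdegu, by convert hdegv,
    by convert hdegother⟩
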